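/- Let L be a color gLt-algebra admitting a multiplicative basis {e_i}_{i∈I} (i.e. a quasi-multiplicative basis with V = 0, so for all i₁,…,iₙ ∈ I one has ⟨e_{i₁},…,e_{iₙ}⟩ ∈ 𝔽e_j for some j ∈ I). Then L = ⊕_{[i]∈I/∼} 𝔍_{[i]}, a direct sum of the color gLt-ideals 𝔍_{[i]} = ⊕_{j∈[i]} 𝔽e_j, each admitting a multiplicative basis inherited from that of L. -/

import Mathlib

set_option maxHeartbeats 1000000

/-- A (color) generalized Lie-type algebra: an `(n+2)`-ary `G`-graded algebra with
bicharacter `epsilon` satisfying the (colored) generalized Lie-type identities with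
structure constants `alpha` (allowed to depend on the degrees of the arguments). -/
structure ColorGLT (F : Type) [Field F] (G : Type) [AddCommGroup G] [DecidableEq G]
    (L : Type) [AddCommGroup L] [Module F L] (n : ℕ) where
  bracket : MultilinearMap F (fun _ : Fin (n + 2) => L) L
  grading : G → Submodule F L
  isInternal : DirectSum.IsInternal grading
  bracket_graded : ∀ (g : Fin (n + 2) → G) (x : Fin (n + 2) → L),
    (∀ t, x t ∈ grading (g t)) → bracket x ∈ grading (∑ t, g t)
  epsilon : G → G → F
  epsilon_ne_zero : ∀ g h, epsilon g h ≠ 0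
  epsilon_add_left : ∀ g h k, epsilon (g + h) k = epsilon g k * epsilon h k
  epsilon_add_right : ∀ g h k, epsilon k (g + h) = epsilon k g * epsilon k h
  epsilon_skew : ∀ g h, epsilon g h * epsilon h g = 1
  alpha : Fin (n + 2) → Fin (n + 2) → Fin (n + 2) → Equiv.Perm (Fin (n + 2)) →
      Equiv.Perm (Fin (n + 1)) → (Fin (n + 2) → G) → (Fin (n + 1) → G) → F
  glt : ∀ (k : Fin (n + 2)) (gx : Fin (n + 2) → G) (gy : Fin (n + 1) → G)
      (x : Fin (n + 2) → L) (y : Fin (n + 1) → L),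
      (∀ t, x t ∈ grading (gx t)) → (∀ t, y t ∈ grading (gy t)) →
      bracket (Fin.insertNth k (bracket x) y) =
        ∑ i : Fin (n + 2), ∑ j : Fin (n + 2), ∑ σ₁ : Equiv.Perm (Fin (n + 2)),
          ∑ σ₂ : Equiv.Perm (Fin (n + 1)),
            alpha i j k σ₁ σ₂ gx gy •
              bracket (Function.update (fun t => x (σ₁ t)) i
                (bracket (Fin.insertNth j (x (σ₁ i)) (fun t => y (σ₂ t)))))

namespace ColorGLT

variable {F : Type} [Field F] {G : Type} [AddCommGroup G] [DecidableEq G]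
    {L : Type} [AddCommGroup L] [Module F L] {n : ℕ}

/-- A color gLt-ideal: a graded subspace `S` with `⟨S, L, …, L⟩_σ ⊆ S` for all `σ ∈ Sₙ`. -/
def IsIdeal (A : ColorGLT F G L n) (S : Submodule F L) : Prop :=
  (S = ⨆ g : G, S ⊓ A.grading g) ∧
  ∀ (σ : Equiv.Perm (Fin (n + 2))) (x : Fin (n + 2) → L),
    x 0 ∈ S → A.bracket (fun t => x (σ t)) ∈ S

/-- `L` is centerless: `Z(L) = {x : ⟨x, L, …, L⟩_σ = 0 ∀ σ} = 0`. -/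
def Centerless (A : ColorGLT F G L n) : Prop :=
  ∀ x : L, (∀ (σ : Equiv.Perm (Fin (n + 2))) (y : Fin (n + 2) → L),
    y 0 = x → A.bracket (fun t => y (σ t)) = 0) → x = 0

end ColorGLT

/-- A quasi-multiplicative basis of a color gLt-algebra: `L = V ⊕ W`, with a homogeneous
basis `{e i}` of `W ≠ 0` satisfying the three quasi-multiplicativity conditions. -/
structure QMBasis {F : Type} [Field F] {G : Type} [AddCommGroup G] [DecidableEq G]
    {L : Type} [AddCommGroup L] [Module F L] {n : ℕ}
    (A : ColorGLT F G L n) (I : Type) where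
  V : Submodule F L
  W : Submodule F L
  compl : IsCompl V W
  W_ne_bot : W ≠ ⊥
  V_graded : V = ⨆ g : G, V ⊓ A.grading g
  W_graded : W = ⨆ g : G, W ⊓ A.grading g
  e : I → L
  deg : I → G
  e_homog : ∀ i, e i ∈ A.grading (deg i)
  e_indep : LinearIndependent F e
  e_span : Submodule.span F (Set.range e) = W
  qm1 : ∀ c : Fin (n + 2) → I,
    (∃ j, A.bracket (fun t => e (c t)) ∈ Submodule.span F {e j}) ∨
      A.bracket (fun t => e (c t)) ∈ V
  qm2 : ∀ (σ : Equiv.Perm (Fin (n + 2))) (S : Finset (Fin (n + 2))),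
    S.Nonempty → S ≠ Finset.univ → ∀ ind : Fin (n + 2) → I, ∃ j : I,
      ∀ x : Fin (n + 2) → L, (∀ t, t ∈ S → x t = e (ind t)) →
        (∀ t, t ∉ S → x t ∈ V) →
        A.bracket (fun t => x (σ t)) ∈ Submodule.span F {e j}
  qm3 : (∃ j, ∀ x : Fin (n + 2) → L, (∀ t, x t ∈ V) →
          A.bracket x ∈ Submodule.span F {e j}) ∨
        (∀ x : Fin (n + 2) → L, (∀ t, x t ∈ V) → A.bracket x ∈ V)

namespace QMBasis

variable {F : Type} [Field F] {G : Type} [AddCommGroup G] [DecidableEq G]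
    {L : Type} [AddCommGroup L] [Module F L] {n : ℕ} {I : Type}
    {A : ColorGLT F G L n}

/-- The set of elements represented by an index of `𝔉 = I ∪ {v}`: `e i` for `some i`,
the subspace `V` for `none` (= `v`). -/
def elemSet (B : QMBasis A I) : Option I → Set L
  | none => (B.V : Set L)
  | some i => {B.e i}

/-- The target set of an index of `𝔉`: the line `𝔽 e j` for `some j`, `V` for `v`. -/
def targetSet (B : QMBasis A I) : Option I → Set L
  | none => (B.V : Set L)
  | some j => (Submodule.span F {B.e j} : Set L)

/-- `x ∈ a_σ(c)`: the `σ`-permuted product of the elements represented by `c` is nonzero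
and lands in the target represented by `x`; the value `v` is only allowed for all-basis
or all-`V` tuples. -/
def aMem (B : QMBasis A I) (σ : Equiv.Perm (Fin (n + 2)))
    (c : Fin (n + 2) → Option I) (x : Option I) : Prop :=
  (∃ z : Fin (n + 2) → L, (∀ t, z t ∈ B.elemSet (c (σ t))) ∧ A.bracket z ≠ 0) ∧
  (∀ z : Fin (n + 2) → L, (∀ t, z t ∈ B.elemSet (c (σ t))) → A.bracket z ∈ B.targetSet x) ∧
  (x = none → ((∀ t, (c t).isSome = true) ∨ (∀ t, c t = none)))

/-- An admissible `(n+1)`-tuple over `𝔉 ∪ 𝔉̄`: all entries barred (`true`) or all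
unbarred (`false`). -/
abbrev Tup (I : Type) (n : ℕ) := Bool × (Fin (n + 1) → Option I)

/-- `x ∈ μ(j, X)` where `j ∈ 𝔉 ∪ 𝔉̄` (left = unbarred, right = barred) and `X` is an
admissible tuple; defined via `a_σ` and `b_σ` as in the paper. -/
def muMem (B : QMBasis A I) :
    Option I ⊕ Option I → Tup I n → Option I → Prop
  | Sum.inl j, (false, c), x => ∃ σ : Equiv.Perm (Fin (n + 2)), B.aMem σ (Fin.cons j c) x
  | Sum.inl j, (true, c), x => ∃ σ : Equiv.Perm (Fin (n + 2)), B.aMem σ (Fin.cons x c) j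
  | Sum.inr j, (false, c), x =>
      ∃ (k : Fin (n + 1)) (σ : Equiv.Perm (Fin (n + 2))),
        B.aMem σ (Fin.cons x (Fin.cons j (fun t => c (k.succAbove t)))) (c k)
  | Sum.inr _, (true, _), _ => False

/-- The map `φ : P(I ∪ Ī) × T → P(I ∪ Ī)`, `φ(J, X) = K ∪ K̄` with
`K = (⋃_{j ∈ J} μ(j, X)) \ {v}` (left = `I`, right = `Ī`). -/
def phi (B : QMBasis A I) (J : Set (I ⊕ I)) (X : Tup I n) : Set (I ⊕ I) :=
  {p | ∃ i : I, (p = Sum.inl i ∨ p = Sum.inr i) ∧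
    ∃ j ∈ J, B.muMem (Sum.map some some j) X (some i)}

/-- Iterated application of `φ` along a list of tuples. -/
def chain (B : QMBasis A I) : Set (I ⊕ I) → List (Tup I n) → Set (I ⊕ I)
  | s, [] => s
  | s, X :: r => chain B (B.phi s X) r

/-- The connection relation: `i` is connected to `j`. -/
def Connected (B : QMBasis A I) (i j : I) : Prop :=
  i = j ∨ ∃ (Xs : List (Tup I n)) (st : I ⊕ I),
    Xs ≠ [] ∧ (st = Sum.inl i ∨ st = Sum.inr i) ∧
    (∀ m, m < Xs.length → (chain B {st} (List.take m Xs)).Nonempty) ∧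
    Sum.inl j ∈ chain B {st} Xs

/-- The connection class `[i]` of `i`. -/
def cls (B : QMBasis A I) (i : I) : Set I := {j | B.Connected i j}

/-- `W_{[i]} = ⊕_{j ∈ [i]} 𝔽 e_j`. -/
def Wcls (B : QMBasis A I) (i : I) : Submodule F L :=
  Submodule.span F (B.e '' B.cls i)

/-- `V_{[i]} = (Σ_{i₁,…,iₙ ∈ [i]} 𝔽⟨e_{i₁},…,e_{iₙ}⟩) ∩ V`. -/
def Vcls (B : QMBasis A I) (i : I) : Submodule F L :=
  Submodule.span F {z : L | ∃ c : Fin (n + 2) → I,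
    (∀ t, c t ∈ B.cls i) ∧ z = A.bracket (fun t => B.e (c t))} ⊓ B.V

/-- `𝔍_{[i]} = V_{[i]} ⊕ W_{[i]}`. -/
def Jcls (B : QMBasis A I) (i : I) : Submodule F L := B.Vcls i ⊔ B.Wcls i

/-- `S` admits a quasi-multiplicative basis inherited from that of `L`:
`S = V_S ⊕ W_S` with `V_S ⊆ V` and `W_S ≠ 0` spanned by a subset of the `e i`. -/
def HasInheritedBasis (B : QMBasis A I) (S : Submodule F L) : Prop :=
  ∃ (V' : Submodule F L) (J' : Set I), V' ≤ B.V ∧ J'.Nonempty ∧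
    S = V' ⊔ Submodule.span F (B.e '' J')

/-- `V` is tight: `V = 0` or `V = Σ_{μ(i₁,…,iₙ) = {v}} 𝔽⟨e_{i₁},…,e_{iₙ}⟩`. -/
def Tight (B : QMBasis A I) : Prop :=
  B.V = ⊥ ∨
    B.V = Submodule.span F {z : L | ∃ c : Fin (n + 2) → I,
      ({x : Option I | ∃ σ, B.aMem σ (fun t => some (c t)) x} = {none}) ∧
      z = A.bracket (fun t => B.e (c t))}

/-- The set of elements represented by `u_{k}`: `u_k = e_k + e_{k̄}` (`= e` of the
underlying index, since `e_{j̄} = 0`) if `k ∉ {v, v̄}`, and `u_k = V` otherwise. -/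
def uSet (B : QMBasis A I) : Option I ⊕ Option I → Set L
  | Sum.inl none => (B.V : Set L)
  | Sum.inr none => (B.V : Set L)
  | Sum.inl (some i) => {B.e i}
  | Sum.inr (some i) => {B.e i}

/-- The full `(n+2)`-tuple `(k₁, …, kₙ)` over `𝔉 ∪ 𝔉̄` obtained from a first entry and
an admissible tuple. -/
def fullTup {I : Type} {n : ℕ} (k₁ : Option I ⊕ Option I) (X : Tup I n) :
    Fin (n + 2) → Option I ⊕ Option I :=
  Fin.cons k₁ (fun t => if X.1 then Sum.inr (X.2 t) else Sum.inl (X.2 t))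

/-- The basis is `μ`-quasi-multiplicative: whenever `i ∈ μ(k₁, …, kₙ)` then
`e i ∈ 𝔽⟨u_{k₁}, …, u_{kₙ}⟩_σ` for some `σ ∈ Sₙ`. -/
def MuQM (B : QMBasis A I) : Prop :=
  ∀ (k₁ : Option I ⊕ Option I) (X : Tup I n) (i : I),
    B.muMem k₁ X (some i) →
    ∃ (σ : Equiv.Perm (Fin (n + 2))) (z : Fin (n + 2) → L),
      (∀ t, z t ∈ B.uSet (fullTup k₁ X (σ t))) ∧
      B.e i ∈ Submodule.span F {A.bracket z}

end QMBasis


section Aux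

open QMBasis

variable {F : Type} [Field F] {G : Type} [AddCommGroup G] [DecidableEq G]
    {L : Type} [AddCommGroup L] [Module F L] {n : ℕ} {I : Type}
    {A : ColorGLT F G L n} (B : QMBasis A I)

lemma aux_phi_mono {J J' : Set (I ⊕ I)} (h : J ⊆ J') (X : Tup I n) :
    B.phi J X ⊆ B.phi J' X := by
  rintro p ⟨i, hi, j, hj, hm⟩
  exact ⟨i, hi, j, h hj, hm⟩

lemma aux_chain_mono (l : List (Tup I n)) : ∀ {s s' : Set (I ⊕ I)}, s ⊆ s' →
    B.chain s l ⊆ B.chain s' l := by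
  induction l with
  | nil => intro s s' h; simpa [QMBasis.chain] using h
  | cons X r ih =>
    intro s s' h
    simp only [QMBasis.chain]
    exact ih (aux_phi_mono B h X)

lemma aux_chain_append (l r : List (Tup I n)) : ∀ s, B.chain s (l ++ r) = B.chain (B.chain s l) r := by
  induction l with
  | nil => intro s; rfl
  | cons X t ih => intro s; simp only [List.cons_append, QMBasis.chain]; exact ih _

lemma aux_phi_inl {J : Set (I ⊕ I)} {X : Tup I n} {m : I} :
    Sum.inl m ∈ B.phi J X ↔ ∃ q ∈ J, B.muMem (Sum.map some some q) X (some m) := by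
  constructor
  · rintro ⟨i, hi, j, hj, hm⟩
    rcases hi with hi | hi
    · cases hi; exact ⟨j, hj, hm⟩
    · exact absurd hi (by simp)
  · rintro ⟨q, hq, hm⟩
    exact ⟨m, Or.inl rfl, q, hq, hm⟩

lemma aux_phi_both {J : Set (I ⊕ I)} {X : Tup I n} {m : I}
    (h : Sum.inl m ∈ B.phi J X) : Sum.inr m ∈ B.phi J X := by
  obtain ⟨i, hi, j, hj, hm⟩ := h
  rcases hi with hi | hi
  · cases hi; exact ⟨m, Or.inr rfl, j, hj, hm⟩
  · exact absurd hi (by simp)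

lemma aux_chain_both (l : List (Tup I n)) (hl : l ≠ []) : ∀ (s : Set (I ⊕ I)) {m : I},
    Sum.inl m ∈ B.chain s l → Sum.inr m ∈ B.chain s l := by
  induction l with
  | nil => exact absurd rfl hl
  | cons X r ih =>
    intro s m h
    simp only [QMBasis.chain] at h ⊢
    rcases eq_or_ne r [] with rfl | hr
    · exact aux_phi_both B h
    · exact ih hr _ h

lemma aux_chain_sub (l : List (Tup I n)) : ∀ (s : Set (I ⊕ I)) {x : I ⊕ I},
    x ∈ B.chain s l → ∃ q ∈ s, x ∈ B.chain {q} l := by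
  induction l with
  | nil => intro s x h; exact ⟨x, h, rfl⟩
  | cons X r ih =>
    intro s x h
    simp only [QMBasis.chain] at h ⊢
    obtain ⟨q', hq', hx⟩ := ih _ h
    obtain ⟨i, hi, j, hj, hm⟩ := hq'
    refine ⟨j, hj, ?_⟩
    have hsub : ({q'} : Set (I ⊕ I)) ⊆ B.phi {j} X :=
      Set.singleton_subset_iff.2 ⟨i, hi, j, rfl, hm⟩
    exact aux_chain_mono B r hsub hx

lemma aux_phi_dest {p q' : I ⊕ I} {X : Tup I n} (h : q' ∈ B.phi {p} X) :
    ∃ m, (q' = Sum.inl m ∨ q' = Sum.inr m) ∧ B.muMem (Sum.map some some p) X (some m) := by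
  obtain ⟨i, hi, j, hj, hm⟩ := h
  rcases hj with rfl
  exact ⟨i, hi, hm⟩

/-- An auxiliary notion of reachability by a nonempty chain. -/
def auxReach (B : QMBasis A I) (p : I ⊕ I) (j : I) : Prop :=
  ∃ Xs : List (Tup I n), Xs ≠ [] ∧
    (∀ m, m < Xs.length → (B.chain {p} (Xs.take m)).Nonempty) ∧
    Sum.inl j ∈ B.chain {p} Xs

lemma auxReach_trans {p q : I ⊕ I} {j k : I} (h1 : auxReach B p j)
    (hq : q = Sum.inl j ∨ q = Sum.inr j) (h2 : auxReach B q k) : auxReach B p k := by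
  obtain ⟨Xs, hXs, hpre1, hmem1⟩ := h1
  obtain ⟨Ys, hYs, hpre2, hmem2⟩ := h2
  have hq' : q ∈ B.chain {p} Xs := by
    rcases hq with rfl | rfl
    · exact hmem1
    · exact aux_chain_both B Xs hXs _ hmem1
  refine ⟨Xs ++ Ys, by simp [hXs], ?_, ?_⟩
  · intro m hm
    rw [List.take_append]
    rcases le_or_gt m Xs.length with h | h
    · rw [Nat.sub_eq_zero_of_le h]
      simp only [List.take_zero, List.append_nil]
      rcases h.lt_or_eq with h' | rfl
      · exact hpre1 m h'
      · rw [List.take_length]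
        exact ⟨_, hq'⟩
    · rw [List.take_of_length_le h.le, aux_chain_append]
      have hlt : m - Xs.length < Ys.length := by
        rw [List.length_append] at hm; omega
      exact (hpre2 _ hlt).mono (aux_chain_mono B _ (Set.singleton_subset_iff.2 hq'))
  · rw [aux_chain_append]
    exact aux_chain_mono B Ys (Set.singleton_subset_iff.2 hq') hmem2

lemma auxReach_single {p : I ⊕ I} {X : Tup I n} {j : I}
    (h : B.muMem (Sum.map some some p) X (some j)) : auxReach B p j := by
  refine ⟨[X], by simp, ?_, ?_⟩
  · intro m hm
    simp only [List.length_singleton] at hm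
    interval_cases m
    exact ⟨p, rfl⟩
  · show Sum.inl j ∈ B.phi {p} X
    exact (aux_phi_inl B).2 ⟨p, rfl, h⟩



lemma aux_aMem_reindex {σ : Equiv.Perm (Fin (n+2))} {d : Fin (n+2) → Option I} {x : Option I}
    (π : Equiv.Perm (Fin (n+2))) (h : B.aMem σ d x) :
    B.aMem (σ.trans π) (fun t => d (π.symm t)) x := by
  obtain ⟨⟨z, hz, hz0⟩, h2, h3⟩ := h
  refine ⟨⟨z, fun t => ?_, hz0⟩, fun z' hz' => ?_, fun hx => ?_⟩
  · simpa using hz t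
  · exact h2 z' (fun t => by simpa using hz' t)
  · rcases h3 hx with h | h
    · exact Or.inl fun t => h _
    · exact Or.inr fun t => h _

lemma aux_cons_swap {α : Type} (a b : α) (r : Fin n → α) (t : Fin (n + 2)) :
    (Fin.cons a (Fin.cons b r) : Fin (n+2) → α) (Equiv.swap 0 1 t) =
      (Fin.cons b (Fin.cons a r) : Fin (n+2) → α) t := by
  refine Fin.cases ?_ (fun s => ?_) t
  · rw [Equiv.swap_apply_left, Fin.cons_zero, ← Fin.succ_zero_eq_one, Fin.cons_succ,
      Fin.cons_zero]
  · refine Fin.cases ?_ (fun u => ?_) s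
    · have hs : Equiv.swap (0 : Fin (n+2)) 1 (Fin.succ 0) = 0 := by
        rw [Fin.succ_zero_eq_one]; exact Equiv.swap_apply_right 0 1
      rw [hs, Fin.cons_zero, Fin.cons_succ, Fin.cons_zero]
    · have h0 : u.succ.succ ≠ (0 : Fin (n + 2)) := Fin.succ_ne_zero _
      have h1 : u.succ.succ ≠ (1 : Fin (n + 2)) := by
        rw [← Fin.succ_zero_eq_one]
        intro hcon
        exact Fin.succ_ne_zero u (Fin.succ_injective _ hcon)
      rw [Equiv.swap_apply_of_ne_of_ne h0 h1, Fin.cons_succ, Fin.cons_succ, Fin.cons_succ,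
        Fin.cons_succ]

lemma aux_aMem_swap {σ : Equiv.Perm (Fin (n+2))} {a b x : Option I} {r : Fin n → Option I}
    (h : B.aMem σ (Fin.cons a (Fin.cons b r)) x) :
    ∃ σ', B.aMem σ' (Fin.cons b (Fin.cons a r)) x := by
  have h' := aux_aMem_reindex B (Equiv.swap 0 1) h
  have heq : (fun t => (Fin.cons a (Fin.cons b r) : Fin (n+2) → Option I)
      ((Equiv.swap (0 : Fin (n+2)) 1).symm t)) = Fin.cons b (Fin.cons a r) := by
    funext t
    rw [Equiv.symm_swap]
    exact aux_cons_swap a b r t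
  rw [heq] at h'
  exact ⟨_, h'⟩

lemma aux_rev {p : I ⊕ I} {X : Tup I n} {m : I}
    (h : B.muMem (Sum.map some some p) X (some m)) :
    ∃ (X' : Tup I n) (q : I ⊕ I), (q = Sum.inl m ∨ q = Sum.inr m) ∧
      B.muMem (Sum.map some some q) X' (some (Sum.elim id id p)) := by
  obtain ⟨b, c⟩ := X
  rcases p with a | a
  · cases b
    · exact ⟨(true, c), Sum.inl m, Or.inl rfl, h⟩
    · exact ⟨(false, c), Sum.inl m, Or.inl rfl, h⟩
  · cases b
    · obtain ⟨k, σ, hk⟩ := h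
      obtain ⟨σ', h'⟩ := aux_aMem_swap B hk
      refine ⟨(false, Fin.cons (c k) (fun t => c (k.succAbove t))), Sum.inr m, Or.inr rfl,
        0, σ', ?_⟩
      have heq : (fun t => (Fin.cons (c k) (fun t => c (k.succAbove t)) : Fin (n+1) → Option I)
          ((0 : Fin (n+1)).succAbove t)) = fun t => c (k.succAbove t) := by
        funext t
        rw [Fin.zero_succAbove, Fin.cons_succ]
      rw [Fin.cons_zero, heq]
      exact h'
    · exact h.elim

lemma aux_sym (l : List (Tup I n)) (hl : l ≠ []) : ∀ (p : I ⊕ I) {j : I},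
    Sum.inl j ∈ B.chain {p} l →
    ∃ q, (q = Sum.inl j ∨ q = Sum.inr j) ∧ auxReach B q (Sum.elim id id p) := by
  induction l with
  | nil => exact absurd rfl hl
  | cons X r ih =>
    intro p j h
    simp only [QMBasis.chain] at h
    rcases eq_or_ne r [] with rfl | hr
    · have hstep : B.muMem (Sum.map some some p) X (some j) := by
        obtain ⟨q, hq, hm⟩ := (aux_phi_inl B).1 h
        rcases hq with rfl
        exact hm
      obtain ⟨X', q, hq, hstep'⟩ := aux_rev B hstep
      exact ⟨q, hq, auxReach_single B hstep'⟩
    · obtain ⟨q', hq', hx⟩ := aux_chain_sub B r _ h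
      obtain ⟨m', hm', hstep⟩ := aux_phi_dest B hq'
      have hem : Sum.elim id id q' = m' := by rcases hm' with rfl | rfl <;> rfl
      obtain ⟨q, hq, hreach⟩ := ih hr q' hx
      rw [hem] at hreach
      obtain ⟨X', b, hb, hstep'⟩ := aux_rev B hstep
      exact ⟨q, hq, auxReach_trans B hreach hb (auxReach_single B hstep')⟩

lemma aux_conn_symm {i j : I} (h : B.Connected i j) : B.Connected j i := by
  rcases h with rfl | ⟨Xs, st, hXs, hst, hpre, hmem⟩
  · exact Or.inl rfl
  · obtain ⟨q, hq, hreach⟩ := aux_sym B Xs hXs st hmem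
    have hst' : Sum.elim id id st = i := by rcases hst with rfl | rfl <;> rfl
    rw [hst'] at hreach
    obtain ⟨Ys, h1, h2, h3⟩ := hreach
    exact Or.inr ⟨Ys, q, h1, hq, h2, h3⟩

lemma aux_conn_trans {i j k : I} (h1 : B.Connected i j) (h2 : B.Connected j k) :
    B.Connected i k := by
  rcases h1 with rfl | ⟨Xs, st, hXs, hst, hpre, hmem⟩
  · exact h2
  rcases h2 with rfl | ⟨Ys, st', hYs, hst', hpre', hmem'⟩
  · exact Or.inr ⟨Xs, st, hXs, hst, hpre, hmem⟩
  obtain ⟨Zs, h1', h2', h3'⟩ := auxReach_trans B ⟨Xs, hXs, hpre, hmem⟩ hst' ⟨Ys, hYs, hpre', hmem'⟩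
  exact Or.inr ⟨Zs, st, h1', hst, h2', h3'⟩



lemma aux_key (hV : B.V = ⊥) (i : I) (c : Fin (n+2) → I) (t₀ : Fin (n+2))
    (hc : c t₀ ∈ B.cls i) :
    A.bracket (fun t => B.e (c t)) ∈ B.Wcls i := by
  rcases B.qm1 c with ⟨j, hj⟩ | hv
  · by_cases hz : A.bracket (fun t => B.e (c t)) = 0
    · rw [hz]; exact zero_mem _
    · -- one-step connection from c t₀ to j
      have hconn : B.Connected (c t₀) j := by
        set π : Equiv.Perm (Fin (n+2)) := Equiv.swap 0 t₀ with hπ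
        set c' : Fin (n+1) → Option I := fun t => some (c (π t.succ)) with hc'
        have hd : ∀ s, (Fin.cons (some (c t₀)) c' : Fin (n+2) → Option I) s = some (c (π s)) := by
          intro s
          refine Fin.cases ?_ (fun u => ?_) s
          · rw [Fin.cons_zero, hπ, Equiv.swap_apply_left]
          · rw [Fin.cons_succ]
        have hd2 : ∀ t, (Fin.cons (some (c t₀)) c' : Fin (n+2) → Option I) (π t) = some (c t) := by
          intro t
          rw [hd, hπ, Equiv.swap_apply_self]
        have haMem : B.aMem π (Fin.cons (some (c t₀)) c') (some j) := by
          refine ⟨⟨fun t => B.e (c t), fun t => ?_, hz⟩, fun z' hz' => ?_, fun hx => ?_⟩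
          · rw [hd2 t]
            exact rfl
          · have hz'' : z' = fun t => B.e (c t) := by
              funext t
              have := hz' t
              rw [hd2 t] at this
              exact this
            rw [hz'']
            exact hj
          · exact absurd hx (by simp)
        refine Or.inr ⟨[(false, c')], Sum.inl (c t₀), by simp, Or.inl rfl, ?_, ?_⟩
        · intro m hm
          simp only [List.length_singleton] at hm
          interval_cases m
          exact ⟨_, rfl⟩
        · show Sum.inl j ∈ B.phi {Sum.inl (c t₀)} (false, c')
          exact (aux_phi_inl B).2 ⟨Sum.inl (c t₀), rfl, π, haMem⟩
      have hji : j ∈ B.cls i := aux_conn_trans B hc hconn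
      refine Submodule.span_mono ?_ hj
      rw [Set.singleton_subset_iff]
      exact ⟨j, hji, rfl⟩
  · rw [hV, Submodule.mem_bot] at hv
    rw [hv]; exact zero_mem _

lemma aux_ml_span (f : MultilinearMap F (fun _ : Fin (n+2) => L) L) (s : Fin (n+2) → Set L)
    (Q : Submodule F L) (h : ∀ z, (∀ t, z t ∈ s t) → f z ∈ Q) :
    ∀ z, (∀ t, z t ∈ Submodule.span F (s t)) → f z ∈ Q := by
  suffices H : ∀ (S : Finset (Fin (n+2))) z, (∀ t ∈ S, z t ∈ Submodule.span F (s t)) →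
      (∀ t ∉ S, z t ∈ s t) → f z ∈ Q by
    intro z hz
    exact H Finset.univ z (fun t _ => hz t) (fun t ht => absurd (Finset.mem_univ t) ht)
  intro S
  induction S using Finset.induction_on with
  | empty => intro z h1 h2; exact h z (fun t => h2 t (Finset.notMem_empty t))
  | @insert a S ha ih =>
    intro z h1 h2
    have hgoal : f (Function.update z a (z a)) ∈ Q := by
      refine Submodule.span_induction (p := fun y _ => f (Function.update z a y) ∈ Q)
        ?_ ?_ ?_ ?_ (h1 a (Finset.mem_insert_self a S))
      · intro y hy
        refine ih (Function.update z a y) ?_ ?_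
        · intro t ht
          have hta : t ≠ a := fun hcon => ha (hcon ▸ ht)
          rw [Function.update_of_ne hta]
          exact h1 t (Finset.mem_insert_of_mem ht)
        · intro t ht
          by_cases hta : t = a
          · subst hta; rw [Function.update_self]; exact hy
          · rw [Function.update_of_ne hta]
            exact h2 t (fun hcon => (Finset.mem_insert.1 hcon).elim hta ht)
      · show f (Function.update z a 0) ∈ Q
        rw [f.map_update_zero]; exact zero_mem _
      · intro x y _ _ hx hy
        show f (Function.update z a (x + y)) ∈ Q
        rw [f.map_update_add]; exact add_mem hx hy
      · intro r x _ hx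
        show f (Function.update z a (r • x)) ∈ Q
        rw [f.map_update_smul]; exact Submodule.smul_mem _ _ hx
    rwa [Function.update_eq_self] at hgoal

end Aux

theorem stmt9 {F : Type} [Field F] {G : Type} [AddCommGroup G] [DecidableEq G]
    {L : Type} [AddCommGroup L] [Module F L] {n : ℕ} {I : Type}
    {A : ColorGLT F G L n} (B : QMBasis A I) (hV : B.V = ⊥) :
    (⨆ i : I, B.Jcls i) = ⊤ ∧
    (∀ i : I, Disjoint (B.Jcls i) (⨆ j ∈ {j : I | ¬ B.Connected i j}, B.Jcls j)) ∧
    (∀ i : I, A.IsIdeal (B.Jcls i)) ∧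
    (∀ i : I, ∃ J' : Set I, J'.Nonempty ∧ B.Jcls i = Submodule.span F (B.e '' J')) := by
  have hW : B.W = ⊤ := by
    have hcd := B.compl.codisjoint
    rw [hV] at hcd
    have := codisjoint_iff.1 hcd
    simpa using this
  have hJW : ∀ i, B.Jcls i = B.Wcls i := by
    intro i
    unfold QMBasis.Jcls QMBasis.Vcls
    rw [hV]
    simp
  have hicls : ∀ i : I, i ∈ B.cls i := fun i => Or.inl rfl
  refine ⟨?_, ?_, ?_, ?_⟩
  · -- sum is everything
    rw [eq_top_iff, ← hW, ← B.e_span]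
    refine Submodule.span_le.2 ?_
    rintro _ ⟨i, rfl⟩
    have h1 : B.e i ∈ B.Jcls i := by
      rw [hJW]
      exact Submodule.subset_span ⟨i, hicls i, rfl⟩
    exact SetLike.mem_coe.2 (Submodule.mem_iSup_of_mem i h1)
  · -- disjointness
    intro i
    have h2 : (⨆ j ∈ {j : I | ¬ B.Connected i j}, B.Jcls j) ≤
        Submodule.span F (B.e '' ⋃ j ∈ {j : I | ¬ B.Connected i j}, B.cls j) := by
      refine iSup₂_le fun j hj => ?_
      rw [hJW]
      exact Submodule.span_mono (Set.image_mono
        (Set.subset_iUnion₂ (s := fun j _ => B.cls j) j hj))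
    rw [hJW]
    refine Disjoint.mono_right h2 (B.e_indep.disjoint_span_image ?_)
    rw [Set.disjoint_left]
    rintro k hk hk2
    simp only [Set.mem_iUnion, Set.mem_setOf_eq] at hk2
    obtain ⟨j, hj, hkj⟩ := hk2
    exact hj (aux_conn_trans B hk (aux_conn_symm B hkj))
  · -- ideals
    intro i
    constructor
    · apply le_antisymm
      · rw [hJW]
        refine Submodule.span_le.2 ?_
        rintro _ ⟨j, hj, rfl⟩
        exact SetLike.mem_coe.2 (Submodule.mem_iSup_of_mem (B.deg j)
          ⟨Submodule.subset_span ⟨j, hj, rfl⟩, B.e_homog j⟩)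
      · exact iSup_le fun g => inf_le_left
    · intro σ x hx
      refine aux_ml_span A.bracket
        (fun t => if t = σ.symm 0 then B.e '' B.cls i else Set.range B.e)
        (B.Jcls i) ?_ (fun t => x (σ t)) ?_
      · intro z hz
        have hch : ∀ t, ∃ j : I, B.e j = z t ∧ (t = σ.symm 0 → j ∈ B.cls i) := by
          intro t
          by_cases ht : t = σ.symm 0
          · have h0 := hz t
            simp only [if_pos ht] at h0
            obtain ⟨j, hj, hje⟩ := h0
            exact ⟨j, hje, fun _ => hj⟩
          · have h0 := hz t
            simp only [if_neg ht] at h0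
            obtain ⟨j, hje⟩ := h0
            exact ⟨j, hje, fun hcon => absurd hcon ht⟩
        choose cc hc1 hc2 using hch
        have hzc : z = fun t => B.e (cc t) := funext fun t => (hc1 t).symm
        rw [hzc, hJW i]
        exact aux_key B hV i cc (σ.symm 0) (hc2 _ rfl)
      · intro t
        by_cases ht : t = σ.symm 0
        · simp only [if_pos ht]
          subst ht
          rw [Equiv.apply_symm_apply]
          show x 0 ∈ B.Wcls i
          rw [← hJW i]
          exact hx
        · simp only [if_neg ht]
          rw [B.e_span, hW]
          exact Submodule.mem_top
  · -- inherited basis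
    intro i
    refine ⟨B.cls i, ⟨i, hicls i⟩, ?_⟩
    rw [hJW i]
    rfl
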